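/- Let p ∈ (1,2]. Then for all x, u ∈ ℝ^d, ‖x+u‖_p^p ≤ ‖x‖_p^p + ⟨u, ∇(‖·‖_p^p)(x)⟩ + 2^{2−p} ‖u‖_p^p; explicitly, Σ_{i=1}^d |x_i+u_i|^p ≤ Σ_{i=1}^d |x_i|^p + p Σ_{i=1}^d sign(x_i)|x_i|^{p−1} u_i + 2^{2−p} Σ_{i=1}^d |u_i|^p. -/

import Mathlib

open Real Set

-- subadditivity of rpow for exponent ≤ 1, real version
lemma myRpow_add_le {q : ℝ} (hq0 : 0 ≤ q) (hq1 : q ≤ 1) {a b : ℝ} (ha : 0 ≤ a) (hb : 0 ≤ b) :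
    (a + b) ^ q ≤ a ^ q + b ^ q := by
  lift a to NNReal using ha
  lift b to NNReal using hb
  exact_mod_cast NNReal.rpow_add_le_add_rpow a b hq0 hq1

lemma myRpow_sub_le {q : ℝ} (hq0 : 0 ≤ q) (hq1 : q ≤ 1) {a b : ℝ} (hb : 0 ≤ b) (hba : b ≤ a) :
    a ^ q - b ^ q ≤ (a - b) ^ q := by
  have h := myRpow_add_le hq0 hq1 (sub_nonneg.2 hba) hb
  rw [sub_add_cancel] at h
  linarith

-- two-point concavity bound
lemma myConcave {q : ℝ} (hq0 : 0 < q) (hq1 : q ≤ 1) {a b : ℝ} (ha : 0 ≤ a) (hb : 0 ≤ b) :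
    a ^ q + b ^ q ≤ 2 ^ (1 - q) * (a + b) ^ q := by
  lift a to NNReal using ha
  lift b to NNReal using hb
  have key : (a : NNReal) ^ q + b ^ q ≤ 2 ^ (1 - q) * (a + b) ^ q := by
    have h1 : (1 : ℝ) ≤ 1 / q := by rw [le_div_iff₀ hq0]; linarith
    have h := NNReal.rpow_add_le_mul_rpow_add_rpow (a ^ q) (b ^ q) h1
    rw [← NNReal.rpow_mul, ← NNReal.rpow_mul, mul_one_div_cancel hq0.ne', NNReal.rpow_one,
      NNReal.rpow_one] at h
    have h2 := NNReal.rpow_le_rpow h hq0.le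
    rw [← NNReal.rpow_mul, one_div_mul_cancel hq0.ne', NNReal.rpow_one, NNReal.mul_rpow,
      ← NNReal.rpow_mul] at h2
    have : (1 / q - 1) * q = 1 - q := by field_simp
    rwa [this] at h2
  exact_mod_cast key

open Real Set

lemma mySignRpow {q : ℝ} (hq : q ≠ 0) (s : ℝ) :
    Real.sign s * |s| ^ q = (max s 0) ^ q - (max (-s) 0) ^ q := by
  rcases lt_trichotomy s 0 with h | h | h
  · rw [Real.sign_of_neg h, abs_of_neg h, max_eq_right h.le,
      max_eq_left (neg_nonneg.2 h.le), Real.zero_rpow hq]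
    ring
  · subst h
    simp [Real.sign_zero, Real.zero_rpow hq]
  · rw [Real.sign_of_pos h, abs_of_pos h, max_eq_left h.le,
      max_eq_right (neg_nonpos.2 h.le), Real.zero_rpow hq]
    ring

lemma myMono {q : ℝ} (hq0 : 0 < q) {s t : ℝ} (hst : t ≤ s) :
    Real.sign t * |t| ^ q ≤ Real.sign s * |s| ^ q := by
  rw [mySignRpow hq0.ne' s, mySignRpow hq0.ne' t]
  have h1 : (max t 0) ^ q ≤ (max s 0) ^ q :=
    Real.rpow_le_rpow (le_max_right t 0) (max_le_max hst le_rfl) hq0.le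
  have h2 : (max (-s) 0) ^ q ≤ (max (-t) 0) ^ q :=
    Real.rpow_le_rpow (le_max_right (-s) 0) (max_le_max (neg_le_neg hst) le_rfl) hq0.le
  linarith

lemma myHolderAux {q : ℝ} (hq0 : 0 < q) (hq1 : q ≤ 1) {s t : ℝ} (hst : t ≤ s) :
    Real.sign s * |s| ^ q - Real.sign t * |t| ^ q ≤ 2 ^ (1 - q) * (s - t) ^ q := by
  rw [mySignRpow hq0.ne' s, mySignRpow hq0.ne' t]
  set A : ℝ := max s 0 - max t 0 with hA
  set B : ℝ := max (-t) 0 - max (-s) 0 with hB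
  have hA0 : 0 ≤ A := sub_nonneg.2 (max_le_max hst le_rfl)
  have hB0 : 0 ≤ B := sub_nonneg.2 (max_le_max (neg_le_neg hst) le_rfl)
  have hAB : A + B = s - t := by
    have h1 : max s 0 - max (-s) 0 = s := by rcases le_total s 0 with h | h <;> simp [*] <;> linarith [max_eq_left (neg_nonneg.2 h)]
    have h2 : max t 0 - max (-t) 0 = t := by rcases le_total t 0 with h | h <;> simp [*] <;> linarith [max_eq_left (neg_nonneg.2 h)]
    rw [hA, hB]; linarith
  have d1 : (max s 0) ^ q - (max t 0) ^ q ≤ A ^ q := by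
    have := myRpow_sub_le hq0.le hq1 (le_max_right t 0) (max_le_max hst le_rfl)
    simpa [hA] using this
  have d2 : (max (-t) 0) ^ q - (max (-s) 0) ^ q ≤ B ^ q := by
    have := myRpow_sub_le hq0.le hq1 (le_max_right (-s) 0) (max_le_max (neg_le_neg hst) le_rfl)
    simpa [hB] using this
  have dd := myConcave hq0 hq1 hA0 hB0
  rw [hAB] at dd
  linarith

lemma myHolder {q : ℝ} (hq0 : 0 < q) (hq1 : q ≤ 1) (s t : ℝ) :
    |Real.sign s * |s| ^ q - Real.sign t * |t| ^ q| ≤ 2 ^ (1 - q) * |s - t| ^ q := by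
  rcases le_total t s with h | h
  · rw [abs_of_nonneg (sub_nonneg.2 (myMono hq0 h)), abs_of_nonneg (sub_nonneg.2 h)]
    exact myHolderAux hq0 hq1 h
  · rw [abs_sub_comm, abs_sub_comm s t,
      abs_of_nonneg (sub_nonneg.2 (myMono hq0 h)), abs_of_nonneg (sub_nonneg.2 h)]
    exact myHolderAux hq0 hq1 h
lemma myCont {q : ℝ} (hq : 0 < q) : Continuous fun s : ℝ => Real.sign s * |s| ^ q := by
  have h : (fun s : ℝ => Real.sign s * |s| ^ q)
      = fun s => (max s 0) ^ q - (max (-s) 0) ^ q := funext fun s => mySignRpow hq.ne' s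
  rw [h]
  exact ((Real.continuous_rpow_const hq.le).comp (continuous_id.max continuous_const)).sub
    ((Real.continuous_rpow_const hq.le).comp (continuous_neg.max continuous_const))

lemma myDeriv {p : ℝ} (hp : 1 < p) (y : ℝ) :
    HasDerivAt (fun z : ℝ => |z| ^ p) (p * Real.sign y * |y| ^ (p - 1)) y := by
  rcases lt_trichotomy y 0 with hy | hy | hy
  · have hg := Real.hasDerivAt_rpow_const (x := -y) (p := p) (Or.inl (neg_pos.2 hy).ne')
    have h := hg.comp y (hasDerivAt_neg y)
    have heq : (fun z : ℝ => |z| ^ p) =ᶠ[nhds y] ((fun z : ℝ => z ^ p) ∘ fun z => -z) := by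
      filter_upwards [gt_mem_nhds hy] with z hz
      simp [Function.comp, abs_of_neg hz]
    have h2 := h.congr_of_eventuallyEq heq
    refine h2.congr_deriv ?_
    rw [Real.sign_of_neg hy, abs_of_neg hy]
    ring
  · subst hy
    have h0 : p * Real.sign 0 * |(0 : ℝ)| ^ (p - 1) = 0 := by simp [Real.sign_zero]
    rw [h0, hasDerivAt_iff_isLittleO]
    have hp0 : p ≠ 0 := by linarith
    simp only [abs_zero, Real.zero_rpow hp0, sub_zero, smul_zero]
    rw [Asymptotics.isLittleO_iff]
    intro c hc
    have htend : Filter.Tendsto (fun z : ℝ => |z| ^ (p - 1)) (nhds 0) (nhds 0) := by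
      have hcont := (Real.continuous_rpow_const (by linarith : (0:ℝ) ≤ p - 1)).comp
        continuous_abs
      have h0' := hcont.tendsto 0
      simpa [Function.comp_def, Real.zero_rpow (by linarith : p - 1 ≠ 0)] using h0'
    filter_upwards [htend.eventually (gt_mem_nhds hc)] with z hz
    have hsplit : |z| ^ p = |z| ^ (p - 1) * |z| := by
      rcases eq_or_ne z 0 with rfl | hzne
      · simp [Real.zero_rpow hp0]
      · have := Real.rpow_add_one (abs_ne_zero.2 hzne) (p - 1)
        rw [sub_add_cancel] at this
        exact this
    rw [Real.norm_eq_abs, Real.norm_eq_abs,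
      abs_of_nonneg (Real.rpow_nonneg (abs_nonneg z) p), hsplit]
    exact mul_le_mul_of_nonneg_right hz.le (abs_nonneg z)
  · have hg := Real.hasDerivAt_rpow_const (x := y) (p := p) (Or.inl hy.ne')
    have heq : (fun z : ℝ => |z| ^ p) =ᶠ[nhds y] fun z : ℝ => z ^ p := by
      filter_upwards [lt_mem_nhds hy] with z hz
      simp [abs_of_pos hz]
    have h2 := hg.congr_of_eventuallyEq heq
    refine h2.congr_deriv ?_
    rw [Real.sign_of_pos hy, abs_of_pos hy]
    ring
lemma myScalar {p : ℝ} (hp1 : 1 < p) (hp2 : p ≤ 2) (x u : ℝ) :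
    |x + u| ^ p ≤ |x| ^ p + p * (Real.sign x * |x| ^ (p - 1) * u) + 2 ^ (2 - p) * |u| ^ p := by
  have hq0 : 0 < p - 1 := by linarith
  have hq1 : p - 1 ≤ 1 := by linarith
  set G : ℝ → ℝ := fun t => p * Real.sign (x + t * u) * |x + t * u| ^ (p - 1) * u with hGdef
  have hderiv : ∀ t : ℝ, HasDerivAt (fun t : ℝ => |x + t * u| ^ p) (G t) t := by
    intro t
    have h1 : HasDerivAt (fun t : ℝ => x + t * u) u t := by
      simpa using ((hasDerivAt_id t).mul_const u).const_add x
    have h2 := (myDeriv hp1 (x + t * u)).comp t h1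
    exact h2
  have hcont : Continuous G := by
    have hc1 : Continuous fun t : ℝ => x + t * u := by continuity
    have hc2 : Continuous fun t : ℝ => Real.sign (x + t * u) * |x + t * u| ^ (p - 1) :=
      (myCont hq0).comp hc1
    have hG' : G = fun t : ℝ => p * (Real.sign (x + t * u) * |x + t * u| ^ (p - 1)) * u := by
      funext t; simp only [hGdef]; ring
    rw [hG']
    exact (continuous_const.mul hc2).mul continuous_const
  have hint : IntervalIntegrable G MeasureTheory.volume 0 1 := hcont.intervalIntegrable 0 1
  have hFTC : ∫ t in (0:ℝ)..1, G t = |x + 1 * u| ^ p - |x + 0 * u| ^ p :=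
    intervalIntegral.integral_eq_sub_of_hasDerivAt (fun t _ => hderiv t) hint
  rw [one_mul, zero_mul, add_zero] at hFTC
  have hG0 : G 0 = p * (Real.sign x * |x| ^ (p - 1) * u) := by
    simp only [hGdef, zero_mul, add_zero]; ring
  -- pointwise bound
  have hbound : ∀ t ∈ Set.Icc (0:ℝ) 1,
      G t - G 0 ≤ p * 2 ^ (2 - p) * |u| ^ p * t ^ (p - 1) := by
    intro t ht
    have key : Real.sign (x + t * u) * |x + t * u| ^ (p - 1)
        - Real.sign x * |x| ^ (p - 1) ≤ 2 ^ (2 - p) * |t * u| ^ (p - 1) := by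
      have h := myHolder hq0 hq1 (x + t * u) x
      have h2 : |(x + t * u) - x| = |t * u| := by ring_nf
      rw [h2] at h
      have h3 : (1 : ℝ) - (p - 1) = 2 - p := by ring
      rw [h3] at h
      calc Real.sign (x + t * u) * |x + t * u| ^ (p - 1) - Real.sign x * |x| ^ (p - 1)
          ≤ |Real.sign (x + t * u) * |x + t * u| ^ (p - 1) - Real.sign x * |x| ^ (p - 1)| :=
            le_abs_self _
        _ ≤ _ := h
    have htu : |t * u| ^ (p - 1) = t ^ (p - 1) * |u| ^ (p - 1) := by
      rw [abs_mul, abs_of_nonneg ht.1, Real.mul_rpow ht.1 (abs_nonneg u)]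
    have hGsub : G t - G 0 = (Real.sign (x + t * u) * |x + t * u| ^ (p - 1)
        - Real.sign x * |x| ^ (p - 1)) * (p * u) := by
      simp only [hGdef, zero_mul, add_zero]; ring
    have hup : |u| * |u| ^ (p - 1) = |u| ^ p := by
      rcases eq_or_ne u 0 with rfl | hu
      · simp [Real.zero_rpow (show p ≠ 0 by linarith), Real.zero_rpow hq0.ne']
      · have := Real.rpow_add_one (abs_ne_zero.2 hu) (p - 1)
        rw [sub_add_cancel] at this
        rw [this]; ring
    calc G t - G 0
        = (Real.sign (x + t * u) * |x + t * u| ^ (p - 1)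
            - Real.sign x * |x| ^ (p - 1)) * (p * u) := hGsub
      _ ≤ |(Real.sign (x + t * u) * |x + t * u| ^ (p - 1)
            - Real.sign x * |x| ^ (p - 1)) * (p * u)| := le_abs_self _
      _ = |Real.sign (x + t * u) * |x + t * u| ^ (p - 1)
            - Real.sign x * |x| ^ (p - 1)| * (p * |u|) := by
          rw [abs_mul, abs_mul, abs_of_nonneg (by linarith : (0:ℝ) ≤ p)]
      _ ≤ 2 ^ (2 - p) * |t * u| ^ (p - 1) * (p * |u|) := by
          apply mul_le_mul_of_nonneg_right _ (by positivity)
          calc |Real.sign (x + t * u) * |x + t * u| ^ (p - 1)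
                - Real.sign x * |x| ^ (p - 1)| ≤ _ := myHolder hq0 hq1 (x + t * u) x
            _ = 2 ^ (2 - p) * |t * u| ^ (p - 1) := by
                congr 2
                · ring
                · congr 1; ring
      _ = p * 2 ^ (2 - p) * |u| ^ p * t ^ (p - 1) := by
          rw [htu, ← hup]; ring
  -- integrate the bound
  have hintR : IntervalIntegrable (fun t : ℝ => p * 2 ^ (2 - p) * |u| ^ p * t ^ (p - 1))
      MeasureTheory.volume 0 1 :=
    (Continuous.intervalIntegrable (by
      exact continuous_const.mul (Real.continuous_rpow_const hq0.le)) 0 1)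
  have hmono := intervalIntegral.integral_mono_on (μ := MeasureTheory.volume)
    (by norm_num : (0:ℝ) ≤ 1) (hint.sub (intervalIntegrable_const (c := G 0))) hintR hbound
  have hconstint : ∫ t in (0:ℝ)..1, G 0 = G 0 := by
    rw [intervalIntegral.integral_const]; norm_num
  have hsubint : ∫ t in (0:ℝ)..1, (G t - G 0) = (∫ t in (0:ℝ)..1, G t) - G 0 := by
    rw [intervalIntegral.integral_sub hint (intervalIntegrable_const (c := G 0)), hconstint]
  have hRval : ∫ t in (0:ℝ)..1, p * 2 ^ (2 - p) * |u| ^ p * t ^ (p - 1)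
      = 2 ^ (2 - p) * |u| ^ p := by
    rw [intervalIntegral.integral_const_mul, integral_rpow (Or.inl (by linarith : (-1:ℝ) < p - 1))]
    rw [Real.one_rpow, Real.zero_rpow (by linarith : p - 1 + 1 ≠ 0)]
    have hpne : p ≠ 0 := by linarith
    field_simp
    ring
  rw [hsubint, hFTC, hRval] at hmono
  rw [hG0] at hmono
  linarith

/-- smoothness-type inequality for the `p`-th power of the `ℓ_p` norm,
`1 < p ≤ 2`:
`Σ|xᵢ+uᵢ|^p ≤ Σ|xᵢ|^p + p Σ sign(xᵢ)|xᵢ|^{p−1} uᵢ + 2^{2−p} Σ|uᵢ|^p`. -/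
theorem stmt10 (p : ℝ) (hp : p ∈ Set.Ioc (1 : ℝ) 2) (d : ℕ) (x u : Fin d → ℝ) :
    ∑ i, |x i + u i| ^ p ≤
      (∑ i, |x i| ^ p) + p * ∑ i, Real.sign (x i) * |x i| ^ (p - 1) * u i +
        2 ^ (2 - p) * ∑ i, |u i| ^ p := by
  calc ∑ i, |x i + u i| ^ p
      ≤ ∑ i, (|x i| ^ p + p * (Real.sign (x i) * |x i| ^ (p - 1) * u i)
          + 2 ^ (2 - p) * |u i| ^ p) :=
        Finset.sum_le_sum fun i _ => myScalar hp.1 hp.2 (x i) (u i)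
    _ = (∑ i, |x i| ^ p) + p * ∑ i, Real.sign (x i) * |x i| ^ (p - 1) * u i +
        2 ^ (2 - p) * ∑ i, |u i| ^ p := by
        rw [Finset.sum_add_distrib, Finset.sum_add_distrib, ← Finset.mul_sum, ← Finset.mul_sum]
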